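/- Let F be an uncountable free group and X ⊆ C*(F) a separable subspace. Then there is a C*-subalgebra C' ⊆ C*(F), unitally *-isomorphic to C*(F_∞) (the full C*-algebra of the free group on countably many generators), with X ⊆ C' and a unital completely positive contractive projection P : C*(F) → C'. -/

import Mathlib

open scoped TensorProduct

/-- A linear map between C*-algebras is completely positive if all its matrix
amplifications preserve positivity. -/
def IsCPMap {A B : Type*} [CStarAlgebra A] [CStarAlgebra B] (P : A →ₗ[ℂ] B) : Prop :=
  ∀ (n : ℕ) (m : Matrix (Fin n) (Fin n) A),
    (∃ y : Matrix (Fin n) (Fin n) A, m = star y * y) →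
    ∃ z : Matrix (Fin n) (Fin n) B, m.map P = star z * z

/-- `𝒞` together with `u : FreeGroup S →* U(𝒞)` is the full group C*-algebra of the
free group on the set `S`: every unitary representation of `FreeGroup S` in a
C*-algebra factors uniquely through a unital *-homomorphism on `𝒞`. -/
def IsUniversalFreeGroupCStar (S : Type) (𝒞 : Type) [CStarAlgebra 𝒞]
    (u : FreeGroup S →* unitary 𝒞) : Prop :=
  ∀ (B : Type) [CStarAlgebra B], ∀ v : FreeGroup S →* unitary B,
    ∃! φ : 𝒞 →⋆ₐ[ℂ] B, ∀ g, φ (u g : 𝒞) = (v g : B)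

/-! ### Auxiliary lemmas -/

section Aux

lemma aux_mk_mem_closure {α : Type*} (T : Set α) :
    ∀ (l : List (α × Bool)), (∀ p ∈ l, p.1 ∈ T) →
      FreeGroup.mk l ∈ Subgroup.closure (FreeGroup.of '' T)
  | [], _ => one_mem _
  | (p :: l), h => by
      have h1 : FreeGroup.mk (p :: l) = FreeGroup.mk [p] * FreeGroup.mk l := by
        rw [FreeGroup.mul_mk]; rfl
      rw [h1]
      refine mul_mem ?_ (aux_mk_mem_closure T l fun q hq => h q (List.mem_cons_of_mem _ hq))
      have hp : p.1 ∈ T := h p List.mem_cons_self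
      rcases p with ⟨x, b⟩
      cases b with
      | true => exact Subgroup.subset_closure ⟨x, hp, rfl⟩
      | false =>
          have : FreeGroup.mk [(x, false)] = (FreeGroup.of x)⁻¹ := by
            rw [show (FreeGroup.of x : FreeGroup α) = FreeGroup.mk [(x, true)] from rfl,
              FreeGroup.inv_mk]
            rfl
          rw [this]
          exact inv_mem (Subgroup.subset_closure ⟨x, hp, rfl⟩)

lemma aux_mem_letters (α : Type*) [DecidableEq α] (g : FreeGroup α) :
    g ∈ Subgroup.closure (FreeGroup.of '' {a | ∃ b, (a, b) ∈ g.toWord}) := by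
  have := aux_mk_mem_closure {a | ∃ b, (a, b) ∈ g.toWord} g.toWord
    (fun p hp => show ∃ b, (p.1, b) ∈ g.toWord from ⟨p.2, by simpa using hp⟩)
  rwa [FreeGroup.mk_toWord] at this

lemma aux_letters_countable {α : Type*} [DecidableEq α] (g : FreeGroup α) :
    {a | ∃ b, (a, b) ∈ g.toWord}.Countable := by
  have hsub : {a | ∃ b, (a, b) ∈ g.toWord} ⊆ Prod.fst '' {p | p ∈ g.toWord} :=
    fun a ⟨b, hb⟩ => ⟨(a, b), hb, rfl⟩
  exact ((g.toWord.finite_toSet).image _).countable.mono hsub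

section Density

variable (S CF : Type) [CStarAlgebra CF] (uF : FreeGroup S →* unitary CF)

/-- The span of the range of the unitaries is a star subalgebra. -/
noncomputable def auxSpanAlg : StarSubalgebra ℂ CF where
  toSubalgebra := Submodule.toSubalgebra
    (Submodule.span ℂ (Set.range (fun g => (uF g : CF))))
    (Submodule.subset_span ⟨1, by simp⟩)
    (by
      intro x y hx hy
      induction hx using Submodule.span_induction with
      | mem a ha =>
          induction hy using Submodule.span_induction with
          | mem b hb =>
              obtain ⟨g, rfl⟩ := ha; obtain ⟨h, rfl⟩ := hb
              exact Submodule.subset_span ⟨g * h, by simp⟩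
          | zero => simp
          | add b c _ _ hb hc => simpa [mul_add] using Submodule.add_mem _ hb hc
          | smul c b _ hb => simpa [mul_smul_comm] using Submodule.smul_mem _ c hb
      | zero => simp
      | add a b _ _ ha hb => simpa [add_mul] using Submodule.add_mem _ ha hb
      | smul c a _ ha => simpa [smul_mul_assoc] using Submodule.smul_mem _ c ha)
  star_mem' := by
    intro x hx
    induction hx using Submodule.span_induction with
    | mem a ha =>
        obtain ⟨g, rfl⟩ := ha
        refine Submodule.subset_span ⟨g⁻¹, ?_⟩
        simp [map_inv, ← Unitary.star_eq_inv, Unitary.coe_star]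
    | zero => simp
    | add a b _ _ ha hb => simpa using Submodule.add_mem _ ha hb
    | smul c a _ ha => simpa using Submodule.smul_mem _ (starRingEnd ℂ c) ha

lemma aux_dense (hCF : IsUniversalFreeGroupCStar S CF uF) (x : CF) :
    x ∈ closure (Submodule.span ℂ (Set.range (fun g => (uF g : CF))) : Set CF) := by
  set A : StarSubalgebra ℂ CF := (auxSpanAlg S CF uF).topologicalClosure with hA
  haveI : IsClosed (A : Set CF) := StarSubalgebra.isClosed_topologicalClosure _
  have hmem : ∀ g : FreeGroup S, (uF g : CF) ∈ A :=
    fun g => StarSubalgebra.le_topologicalClosure _ (Submodule.subset_span ⟨g, rfl⟩)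
  let v : FreeGroup S →* unitary A :=
    { toFun := fun g => ⟨⟨(uF g : CF), hmem g⟩,
        Subtype.ext (Unitary.coe_star_mul_self (uF g)),
        Subtype.ext (Unitary.coe_mul_star_self (uF g))⟩
      map_one' := by ext; simp
      map_mul' := fun g h => by ext; simp }
  obtain ⟨Φ, hΦ, -⟩ := hCF A v
  obtain ⟨φ₀, -, huniq⟩ := hCF CF uF
  have h1 : A.subtype.comp Φ = StarAlgHom.id ℂ CF := by
    rw [huniq (A.subtype.comp Φ) (fun g => by
        rw [StarAlgHom.comp_apply, hΦ g]; rfl),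
      huniq (StarAlgHom.id ℂ CF) (fun g => rfl)]
  have hx : ((Φ x : A) : CF) = x := by
    simpa using DFunLike.congr_fun h1 x
  have : x ∈ A := hx ▸ (Φ x).2
  have h2 : x ∈ ((auxSpanAlg S CF uF).topologicalClosure : Set CF) := this
  rw [StarSubalgebra.topologicalClosure_coe] at h2
  exact h2

end Density

lemma aux_embed (S : Type) (hS : ¬ Countable S) (T : Set S) (hT : T.Countable) :
    ∃ f : ℕ → S, Function.Injective f ∧ T ⊆ Set.range f := by
  have h1 : ¬ (Set.univ \ T : Set S).Countable := by
    intro h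
    apply hS
    rw [← Set.countable_univ_iff]
    have : (Set.univ : Set S) = T ∪ (Set.univ \ T) := by
      simp [Set.union_diff_cancel (Set.subset_univ T)]
    rw [this]
    exact hT.union h
  have h2 : (Set.univ \ T : Set S).Infinite := fun hfin => h1 hfin.countable
  let e : ℕ ↪ ↥(Set.univ \ T : Set S) := h2.natEmbedding
  set U : Set S := T ∪ Set.range (fun n => (e n : S)) with hU
  have hUc : U.Countable := hT.union (Set.countable_range _)
  have hUinf : U.Infinite := by
    refine Set.Infinite.mono Set.subset_union_right ?_
    exact Set.infinite_range_of_injective (Subtype.val_injective.comp e.injective)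
  haveI : Countable ↥U := hUc.to_subtype
  haveI : Infinite ↥U := hUinf.to_subtype
  obtain ⟨d⟩ := nonempty_denumerable ↥U
  refine ⟨fun n => ((Denumerable.eqv ↥U).symm n : S), ?_, ?_⟩
  · exact Subtype.val_injective.comp (Denumerable.eqv ↥U).symm.injective
  · intro t ht
    refine ⟨Denumerable.eqv ↥U ⟨t, Or.inl ht⟩, ?_⟩
    simp

lemma aux_cp {A : Type*} [CStarAlgebra A] (θ : A →⋆ₐ[ℂ] A) :
    IsCPMap θ.toAlgHom.toLinearMap := by
  intro n m ⟨y, hy⟩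
  refine ⟨y.map θ, ?_⟩
  subst hy
  ext i j
  simp [Matrix.map_apply, Matrix.mul_apply, Matrix.star_apply, map_sum, map_mul, map_star]

end Aux

/-- Let `F = FreeGroup S` be an uncountable free group, `CF = C*(F)` its
full group C*-algebra, and `X ⊆ C*(F)` a separable subspace.  Then there is a
C*-subalgebra `C' ⊆ C*(F)`, unitally *-isomorphic to `𝒞 = C*(F_∞)` (the full group
C*-algebra of the free group on countably many generators), with `X ⊆ C'`, together
with a unital completely positive contractive projection `P : C*(F) → C'`. -/
theorem stmt_8 (S : Type) (hS : ¬ Countable S)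
    (CF : Type) [CStarAlgebra CF] (uF : FreeGroup S →* unitary CF)
    (hCF : IsUniversalFreeGroupCStar S CF uF)
    (𝒞 : Type) [CStarAlgebra 𝒞] (u𝒞 : FreeGroup ℕ →* unitary 𝒞)
    (h𝒞 : IsUniversalFreeGroupCStar ℕ 𝒞 u𝒞)
    (X : Submodule ℂ CF) (hX : TopologicalSpace.SeparableSpace X) :
    ∃ C' : StarSubalgebra ℂ CF,
      (X : Set CF) ⊆ (C' : Set CF) ∧
      Nonempty (C' ≃⋆ₐ[ℂ] 𝒞) ∧
      ∃ P : CF →ₗ[ℂ] CF,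
        P 1 = 1 ∧ IsCPMap P ∧ (∀ y, ‖P y‖ ≤ ‖y‖) ∧
        (∀ y, P y ∈ C') ∧ (∀ y ∈ C', P y = y) := by
  classical
  -- notation
  set G : Set S → Subgroup (FreeGroup S) :=
    fun T => Subgroup.closure (FreeGroup.of '' T) with hG
  set uFim : Set S → Set CF :=
    fun T => (fun g => (uF g : CF)) '' (G T : Set (FreeGroup S)) with huFim
  have hGmono : ∀ {T T' : Set S}, T ⊆ T' → G T ≤ G T' :=
    fun h => Subgroup.closure_mono (Set.image_mono h)
  have hMmono : ∀ {T T' : Set S}, T ⊆ T' →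
      closure (Submodule.span ℂ (uFim T) : Set CF) ⊆
      closure (Submodule.span ℂ (uFim T') : Set CF) := by
    intro T T' h
    exact closure_mono (Submodule.span_mono (Set.image_mono (SetLike.coe_subset_coe.mpr (hGmono h))))
  -- Step 2 : every element of CF lies in the closed span of countably many unitaries
  have hstep2 : ∀ x : CF, ∃ T : Set S, T.Countable ∧
      x ∈ closure (Submodule.span ℂ (uFim T) : Set CF) := by
    intro x
    have hx := aux_dense S CF uF hCF x
    obtain ⟨u, hu_mem, hu_lim⟩ := mem_closure_iff_seq_limit.mp hx
    -- for each n pick a finite representation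
    have hrep : ∀ n : ℕ, ∃ T : Set S, T.Countable ∧
        u n ∈ (Submodule.span ℂ (uFim T) : Set CF) := by
      intro n
      obtain ⟨k, c, v, hv⟩ := Submodule.mem_span_set'.mp (hu_mem n)
      -- for each i choose a group element
      have hchoice : ∀ i : Fin k, ∃ g : FreeGroup S, (uF g : CF) = (v i : CF) :=
        fun i => (v i).2
      choose w hw using hchoice
      refine ⟨⋃ i : Fin k, {a | ∃ b, (a, b) ∈ (w i).toWord}, ?_, ?_⟩
      · exact Set.countable_iUnion fun i => aux_letters_countable (w i)
      · rw [← hv]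
        refine Submodule.sum_mem _ fun i _ => Submodule.smul_mem _ _ ?_
        refine Submodule.subset_span ?_
        refine ⟨w i, ?_, hw i⟩
        exact hGmono (Set.subset_iUnion (fun i => {a | ∃ b, (a, b) ∈ (w i).toWord}) i)
          (aux_mem_letters S (w i))
    choose Tn hTnc hTn using hrep
    refine ⟨⋃ n, Tn n, Set.countable_iUnion hTnc, ?_⟩
    refine mem_closure_of_tendsto hu_lim (Filter.Eventually.of_forall fun n => ?_)
    exact Submodule.span_mono
      (Set.image_mono (SetLike.coe_subset_coe.mpr (hGmono (Set.subset_iUnion Tn n)))) (hTn n)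
  -- Step: a single countable set that works for all of X
  haveI : Nonempty X := ⟨⟨0, X.zero_mem⟩⟩
  obtain ⟨D, hDc, hDd⟩ := TopologicalSpace.exists_countable_dense X
  obtain ⟨dseq, hdseq⟩ := hDc.exists_eq_range hDd.nonempty
  set T : Set S := ⋃ n, (hstep2 ((dseq n : X) : CF)).choose with hT
  have hTc : T.Countable := Set.countable_iUnion fun n => (hstep2 _).choose_spec.1
  have hXsub : (X : Set CF) ⊆ closure (Submodule.span ℂ (uFim T) : Set CF) := by
    intro x hx
    have hclosed : IsClosed (closure (Submodule.span ℂ (uFim T) : Set CF)) := isClosed_closure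
    have hxD : x ∈ closure (Subtype.val '' D : Set CF) := by
      have hx' : (⟨x, hx⟩ : X) ∈ closure D := hDd _
      exact map_mem_closure continuous_subtype_val hx' (fun y hy => ⟨y, hy, rfl⟩)
    refine closure_minimal ?_ hclosed hxD
    rintro _ ⟨y, hy, rfl⟩
    rw [hdseq] at hy
    obtain ⟨n, rfl⟩ := hy
    exact hMmono (Set.subset_iUnion _ n) (hstep2 _).choose_spec.2
  -- Step 3 : embed ℕ into S covering T
  obtain ⟨f, hfinj, hfT⟩ := aux_embed S hS T hTc
  -- Step 4 : the retraction
  set ι : FreeGroup ℕ →* FreeGroup S := FreeGroup.map f with hι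
  set r : FreeGroup S →* FreeGroup ℕ :=
    FreeGroup.lift (fun s => if h : ∃ n, f n = s then FreeGroup.of h.choose else 1) with hr
  have hri : ∀ w : FreeGroup ℕ, r (ι w) = w := by
    have : r.comp ι = MonoidHom.id (FreeGroup ℕ) := by
      refine FreeGroup.ext_hom _ _ fun n => ?_
      have h : ∃ m, f m = f n := ⟨n, rfl⟩
      simp only [MonoidHom.comp_apply, MonoidHom.id_apply, hι, FreeGroup.map.of, hr,
        FreeGroup.lift_apply_of, dif_pos h]
      exact congrArg FreeGroup.of (hfinj h.choose_spec)
    exact fun w => DFunLike.congr_fun this w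
  -- Step 5 : the two *-homomorphisms
  obtain ⟨φ, hφ, -⟩ := h𝒞 CF (uF.comp ι)
  obtain ⟨ψ, hψ, -⟩ := hCF 𝒞 (u𝒞.comp r)
  have hid : ∀ x : 𝒞, ψ (φ x) = x := by
    obtain ⟨χ, hχ, hχu⟩ := h𝒞 𝒞 u𝒞
    have e1 : ψ.comp φ = χ := hχu (ψ.comp φ) (fun w => by
      rw [StarAlgHom.comp_apply, hφ w]
      have := hψ (ι w)
      simp only [MonoidHom.comp_apply] at this ⊢
      rw [this, hri])
    have e2 : StarAlgHom.id ℂ 𝒞 = χ := hχu _ (fun w => rfl)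
    exact fun x => DFunLike.congr_fun (e1.trans e2.symm) x
  -- the projection
  set θ : CF →⋆ₐ[ℂ] CF := φ.comp ψ with hθ
  have hθcont : Continuous θ :=
    AddMonoidHomClass.continuous_of_bound θ 1
      (fun x => by simpa using NonUnitalStarAlgHom.norm_apply_le θ x)
  -- fixed points of θ
  have hGrange : G T ≤ ι.range := by
    rw [hG]
    refine Subgroup.closure_le _ |>.mpr ?_
    rintro _ ⟨s, hs, rfl⟩
    obtain ⟨n, rfl⟩ := hfT hs
    exact ⟨FreeGroup.of n, FreeGroup.map.of⟩
  have hfix : ∀ g ∈ G T, θ (uF g : CF) = (uF g : CF) := by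
    intro g hg
    obtain ⟨w, rfl⟩ := hGrange hg
    have h1 : ψ ((uF (ι w) : CF)) = u𝒞 (r (ι w)) := hψ (ι w)
    rw [hθ, StarAlgHom.comp_apply, h1, hri, hφ w]
    rfl
  -- P as a linear map
  set P : CF →ₗ[ℂ] CF := θ.toAlgHom.toLinearMap with hP
  have hPapp : ∀ x, P x = θ x := fun _ => rfl
  -- the fixed submodule
  set Fx : Submodule ℂ CF := LinearMap.eqLocus P LinearMap.id with hFx
  have hFxmem : ∀ x : CF, x ∈ Fx ↔ θ x = x := fun x => Iff.rfl
  have hFxclosed : IsClosed (Fx : Set CF) := by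
    have : (Fx : Set CF) = {x | θ x = x} := rfl
    rw [this]
    exact isClosed_eq hθcont continuous_id
  have hMT : closure (Submodule.span ℂ (uFim T) : Set CF) ⊆ (Fx : Set CF) := by
    refine closure_minimal ?_ hFxclosed
    refine fun x hx => Submodule.span_le.mpr ?_ hx
    rintro _ ⟨g, hg, rfl⟩
    exact (hFxmem _).mpr (hfix g hg)
  -- X is fixed by θ, hence contained in the range of φ
  have hXfix : (X : Set CF) ⊆ (Fx : Set CF) := fun x hx => hMT (hXsub hx)
  refine ⟨φ.range, ?_, ?_, P, ?_, ?_, ?_, ?_, ?_⟩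
  · -- X ⊆ C'
    intro x hx
    have := (hFxmem x).mp (hXfix hx)
    exact ⟨ψ x, this⟩
  · -- the equivalence
    refine ⟨{ toFun := fun y => ψ (y : CF)
              invFun := fun x => ⟨φ x, ⟨x, rfl⟩⟩
              left_inv := ?_
              right_inv := fun x => hid x
              map_mul' := fun a b => by simp [map_mul]
              map_add' := fun a b => by simp [map_add]
              map_star' := fun a => by
                simpa using map_star ψ (a : CF)
              map_smul' := fun c a => by simp [map_smul] }⟩
    rintro ⟨y, x, rfl⟩
    exact Subtype.ext (by simp [hid])
  · -- P 1 = 1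
    simp [hPapp]
  · -- completely positive
    exact aux_cp θ
  · -- contractive
    intro y
    simpa [hPapp] using NonUnitalStarAlgHom.norm_apply_le θ y
  · -- lands in C'
    intro y
    exact ⟨ψ y, rfl⟩
  · -- fixes C'
    rintro y ⟨x, rfl⟩
    show θ (φ x) = φ x
    rw [hθ, StarAlgHom.comp_apply, hid]
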